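/- Fix a base b > 1, integers T ≥ 2 and 1 ≤ t ≤ T, and a constant c > 0. Let C_{t+1} be the value of the Morris counter after t increment operations. Then P( τ̃(C_{t+1}) < t/(b·c·log T) − 1 ) ≤ 1/T^{c−1}, where log is the natural logarithm. -/

import Mathlib

open MeasureTheory ProbabilityTheory
open scoped ENNReal NNReal

namespace MorrisAux

/-- Deterministic Morris level evolution: starting at level `l`, consume `u` inputs `v 0, ..., v (u-1)`. -/
noncomputable def F (b : ℝ) (l : ℕ) : ℕ → (ℕ → ℝ) → ℕ
  | 0, _ => l
  | (u+1), v => F b l u v + (if v u < (b ^ (F b l u v))⁻¹ then 1 else 0)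

@[simp] lemma F_zero (b : ℝ) (l : ℕ) (v : ℕ → ℝ) : F b l 0 v = l := rfl

lemma F_succ (b : ℝ) (l u : ℕ) (v : ℕ → ℝ) :
    F b l (u+1) v = F b l u v + (if v u < (b ^ (F b l u v))⁻¹ then 1 else 0) := rfl

lemma le_F (b : ℝ) (l u : ℕ) (v : ℕ → ℝ) : l ≤ F b l u v := by
  induction u with
  | zero => simp
  | succ u ih => rw [F_succ]; omega

lemma F_congr (b : ℝ) (l : ℕ) : ∀ (u : ℕ) (v w : ℕ → ℝ), (∀ n < u, v n = w n) →
    F b l u v = F b l u w := by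
  intro u
  induction u with
  | zero => intro v w _; rfl
  | succ u ih =>
    intro v w h
    rw [F_succ, F_succ, ih v w (fun n hn => h n (by omega)), h u (by omega)]

lemma F_shift (b : ℝ) (l : ℕ) : ∀ (u : ℕ) (v : ℕ → ℝ),
    F b (l + if v 0 < (b ^ l)⁻¹ then 1 else 0) u (fun n => v (n+1)) = F b l (u+1) v := by
  intro u
  induction u with
  | zero => intro v; rfl
  | succ u ih =>
    intro v
    rw [F_succ, ih v, F_succ b l (u+1) v]

lemma F_measurable (b : ℝ) (l u : ℕ) : Measurable (F b l u) := by
  induction u with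
  | zero => exact measurable_const
  | succ u ih =>
    rw [show F b l (u+1) = fun v => F b l u v + (if v u < (b ^ (F b l u v))⁻¹ then 1 else 0) from rfl]
    apply Measurable.add ih
    have hset : MeasurableSet {v : ℕ → ℝ | v u < (b ^ (F b l u v))⁻¹} := by
      have : {v : ℕ → ℝ | v u < (b ^ (F b l u v))⁻¹}
          = ⋃ k : ℕ, ((F b l u) ⁻¹' {k} ∩ {v : ℕ → ℝ | v u < (b ^ k)⁻¹}) := by
        ext v
        simp only [Set.mem_setOf_eq, Set.mem_iUnion, Set.mem_inter_iff, Set.mem_preimage,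
          Set.mem_singleton_iff]
        exact ⟨fun h => ⟨F b l u v, rfl, h⟩, fun ⟨k, hk, h⟩ => by rw [hk]; exact h⟩
      rw [this]
      exact MeasurableSet.iUnion fun k => (ih (measurableSet_singleton k)).inter
        ((measurable_pi_apply u) measurableSet_Iio)
    exact Measurable.ite hset measurable_const measurable_const

end MorrisAux

namespace MorrisAux2
open MorrisAux

variable {Ω : Type*} [MeasurableSpace Ω]

lemma measure_V_lt (P : Measure Ω) [IsProbabilityMeasure P] (V : ℕ → Ω → ℝ)
    (hVmeas : ∀ s, Measurable (V s))
    (hVunif : ∀ s, P.map (V s) = volume.restrict (Set.Icc (0 : ℝ) 1))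
    (s : ℕ) (r : ℝ) (h0 : 0 ≤ r) (h1 : r ≤ 1) :
    P {ω | V s ω < r} = ENNReal.ofReal r := by
  have he : {ω | V s ω < r} = V s ⁻¹' (Set.Iio r) := rfl
  rw [he, ← Measure.map_apply (hVmeas s) measurableSet_Iio, hVunif s,
    Measure.restrict_apply measurableSet_Iio]
  have hi : Set.Iio r ∩ Set.Icc (0:ℝ) 1 = Set.Ico 0 r := by
    ext y
    simp only [Set.mem_inter_iff, Set.mem_Iio, Set.mem_Icc, Set.mem_Ico]
    constructor
    · rintro ⟨ha, hb, _⟩; exact ⟨hb, ha⟩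
    · rintro ⟨hb, ha⟩; exact ⟨ha, hb, le_trans (le_of_lt ha) h1⟩
  rw [hi, Real.volume_Ico]
  simp

lemma indep_tuple (P : Measure Ω) (V : ℕ → Ω → ℝ)
    (hVmeas : ∀ s, Measurable (V s))
    (hVindep : iIndepFun V P) (s₀ u : ℕ) :
    IndepFun (V s₀) (fun ω (i : Fin u) => V (s₀+1+(i:ℕ)) ω) P := by
  classical
  have hST : Disjoint ({s₀} : Finset ℕ) (Finset.Ico (s₀+1) (s₀+1+u)) := by
    simp only [Finset.disjoint_singleton_left, Finset.mem_Ico]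
    omega
  have h := hVindep.indepFun_finset {s₀} (Finset.Ico (s₀+1) (s₀+1+u)) hST hVmeas
  have hmem : ∀ i : Fin u, s₀+1+(i:ℕ) ∈ Finset.Ico (s₀+1) (s₀+1+u) := by
    intro i; rw [Finset.mem_Ico]; omega
  have h2 := h.comp (φ := fun w : (({s₀} : Finset ℕ) : Type) → ℝ => w ⟨s₀, Finset.mem_singleton_self s₀⟩)
    (ψ := fun w : ((Finset.Ico (s₀+1) (s₀+1+u) : Finset ℕ) : Type) → ℝ =>
      fun i : Fin u => w ⟨s₀+1+(i:ℕ), hmem i⟩)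
    (_mγ := inferInstance) (_mγ' := inferInstance)
    (measurable_pi_apply _) (measurable_pi_lambda _ fun i => measurable_pi_apply _)
  exact h2

/-- extension of a finite tuple to a sequence -/
noncomputable def ext (u : ℕ) (w : Fin u → ℝ) : ℕ → ℝ := fun n => if h : n < u then w ⟨n, h⟩ else 0

lemma ext_measurable (u : ℕ) : Measurable (ext u) := by
  apply measurable_pi_lambda
  intro n
  by_cases h : n < u
  · simp only [ext, dif_pos h]; exact measurable_pi_apply _
  · simp only [ext, dif_neg h]; exact measurable_const

end MorrisAux2

namespace MorrisAux3
open MorrisAux MorrisAux2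

variable {Ω : Type*} [MeasurableSpace Ω]

lemma key (P : Measure Ω) [IsProbabilityMeasure P] (b : ℝ) (hb : 1 < b)
    (V : ℕ → Ω → ℝ)
    (hVmeas : ∀ s, Measurable (V s))
    (hVindep : iIndepFun V P)
    (hVunif : ∀ s, P.map (V s) = volume.restrict (Set.Icc (0 : ℝ) 1))
    (j : ℕ) (hj : 1 ≤ j) (κ : ℝ) (hκ1 : 1 - (b ^ j)⁻¹ ≤ κ) (hκ2 : κ < 1) :
    ∀ (u s₀ l : ℕ), 1 ≤ l → l ≤ j →
      P {ω | F b l u (fun n => V (s₀+n) ω) ≤ j}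
        ≤ ENNReal.ofReal ((∏ k ∈ Finset.Ico l j, ((b ^ k)⁻¹ / ((b ^ k)⁻¹ - (1 - κ)))) * κ ^ u) := by
  have hb0 : (0:ℝ) < b := lt_trans one_pos hb
  have hbk : ∀ k : ℕ, (0:ℝ) < b ^ k := fun k => pow_pos hb0 k
  have hd0 : 0 < 1 - κ + (b ^ j)⁻¹ := by
    have := inv_pos.mpr (hbk j); linarith
  have hκ0 : 0 < κ := by
    have h1 : (b ^ j)⁻¹ < 1 := by
      rw [inv_lt_one_iff₀]
      right
      exact one_lt_pow₀ hb (by omega)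
    linarith
  have hfac_pos : ∀ k : ℕ, k < j → 0 < (b ^ k)⁻¹ - (1 - κ) := by
    intro k hk
    have h1 : (b ^ j)⁻¹ < (b ^ k)⁻¹ := by
      apply inv_strictAnti₀ (hbk k)
      exact pow_lt_pow_right₀ hb hk
    linarith
  have hfac_one : ∀ k : ℕ, k < j → (1:ℝ) ≤ (b ^ k)⁻¹ / ((b ^ k)⁻¹ - (1 - κ)) := by
    intro k hk
    rw [le_div_iff₀ (hfac_pos k hk)]
    have : (0:ℝ) ≤ 1 - κ := by linarith
    linarith
  have hprod_one : ∀ l : ℕ, (1:ℝ) ≤ ∏ k ∈ Finset.Ico l j, ((b ^ k)⁻¹ / ((b ^ k)⁻¹ - (1 - κ))) := by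
    intro l
    have := Finset.prod_le_prod (f := fun _ : ℕ => (1:ℝ))
      (g := fun k => (b ^ k)⁻¹ / ((b ^ k)⁻¹ - (1 - κ))) (s := Finset.Ico l j)
      (fun i _ => zero_le_one)
      (fun k hk => by rw [Finset.mem_Ico] at hk; simpa using hfac_one k hk.2)
    simpa using this
  intro u
  induction u with
  | zero =>
    intro s₀ l hl1 hlj
    have hone : {ω | F b l 0 (fun n => V (s₀+n) ω) ≤ j} = Set.univ := by
      ext ω; simp [hlj]
    rw [hone, measure_univ, pow_zero, mul_one]
    calc (1:ℝ≥0∞) = ENNReal.ofReal 1 := ENNReal.ofReal_one.symm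
      _ ≤ _ := ENNReal.ofReal_le_ofReal (hprod_one l)
  | succ u IH =>
    intro s₀ l hl1 hlj
    set A : Set Ω := {ω | V s₀ ω < (b ^ l)⁻¹} with hA
    set B₁ : Set Ω := {ω | F b (l+1) u (fun n => V (s₀+1+n) ω) ≤ j} with hB₁
    set B₂ : Set Ω := {ω | F b l u (fun n => V (s₀+1+n) ω) ≤ j} with hB₂
    -- event decomposition via the shift lemma
    have hv : ∀ ω : Ω, F b l (u+1) (fun n => V (s₀+n) ω)
        = if V s₀ ω < (b ^ l)⁻¹ then F b (l+1) u (fun n => V (s₀+1+n) ω)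
          else F b l u (fun n => V (s₀+1+n) ω) := by
      intro ω
      have hs := F_shift b l u (fun n => V (s₀+n) ω)
      have harg : (fun n => V (s₀+(n+1)) ω) = (fun n => V (s₀+1+n) ω) := by
        funext n; congr 1; omega
      rw [← hs]
      have h0 : V (s₀+0) ω = V s₀ ω := by norm_num
      by_cases h : V s₀ ω < (b ^ l)⁻¹
      · rw [if_pos h, if_pos (h0 ▸ h)]
        exact congrArg (F b (l+1) u) harg
      · rw [if_neg h, if_neg (h0 ▸ h)]
        exact congrArg (F b l u) harg
    have hE : {ω | F b l (u+1) (fun n => V (s₀+n) ω) ≤ j} = (A ∩ B₁) ∪ (Aᶜ ∩ B₂) := by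
      ext ω
      simp only [Set.mem_setOf_eq, Set.mem_union, Set.mem_inter_iff, Set.mem_compl_iff,
        hv ω, hA, hB₁, hB₂]
      by_cases h : V s₀ ω < (b ^ l)⁻¹ <;> simp [h]
    -- measurability
    have hAm : MeasurableSet A := (hVmeas s₀) measurableSet_Iio
    have htuple_meas : Measurable (fun (ω : Ω) (n : ℕ) => V (s₀+1+n) ω) :=
      measurable_pi_lambda _ fun n => hVmeas _
    have hB₁m : MeasurableSet B₁ := by
      have : B₁ = (fun ω => F b (l+1) u (fun n => V (s₀+1+n) ω)) ⁻¹' (Set.Iic j) := rfl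
      rw [this]
      exact ((F_measurable b (l+1) u).comp htuple_meas) measurableSet_Iic
    have hB₂m : MeasurableSet B₂ := by
      have : B₂ = (fun ω => F b l u (fun n => V (s₀+1+n) ω)) ⁻¹' (Set.Iic j) := rfl
      rw [this]
      exact ((F_measurable b l u).comp htuple_meas) measurableSet_Iic
    -- independence products
    have hIndep := indep_tuple P V hVmeas hVindep s₀ u
    have hprodmeasure : ∀ (S : Set ℝ), MeasurableSet S → ∀ (l' : ℕ),
        P (V s₀ ⁻¹' S ∩ {ω | F b l' u (fun n => V (s₀+1+n) ω) ≤ j})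
        = P (V s₀ ⁻¹' S) * P {ω | F b l' u (fun n => V (s₀+1+n) ω) ≤ j} := by
      intro S hSmeas l'
      have hrw : ∀ ω : Ω, F b l' u (fun n => V (s₀+1+n) ω)
          = F b l' u (ext u (fun i : Fin u => V (s₀+1+(i:ℕ)) ω)) := by
        intro ω
        apply F_congr
        intro n hn
        simp only [ext, dif_pos hn]
      have hS : MeasurableSet {w : Fin u → ℝ | F b l' u (ext u w) ≤ j} := by
        have : {w : Fin u → ℝ | F b l' u (ext u w) ≤ j}
            = (fun w => F b l' u (ext u w)) ⁻¹' (Set.Iic j) := rfl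
        rw [this]
        exact ((F_measurable b l' u).comp (ext_measurable u)) measurableSet_Iic
      have hB' : {ω | F b l' u (fun n => V (s₀+1+n) ω) ≤ j}
          = (fun ω => (fun i : Fin u => V (s₀+1+(i:ℕ)) ω)) ⁻¹' {w | F b l' u (ext u w) ≤ j} := by
        ext ω
        simp only [Set.mem_setOf_eq, Set.mem_preimage, hrw ω]
      rw [hB']
      exact hIndep.measure_inter_preimage_eq_mul _ _ hSmeas hS
    -- the numeric values
    have hql1 : (b ^ l)⁻¹ ≤ 1 := by
      rw [inv_le_one_iff₀]
      right
      exact one_le_pow₀ hb.le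
    have hql0 : (0:ℝ) ≤ (b ^ l)⁻¹ := (inv_pos.mpr (hbk l)).le
    have hPA : P A = ENNReal.ofReal ((b ^ l)⁻¹) :=
      measure_V_lt P V hVmeas hVunif s₀ _ hql0 hql1
    have hPAc : P Aᶜ = ENNReal.ofReal (1 - (b ^ l)⁻¹) := by
      rw [measure_compl hAm (measure_ne_top P A), hPA, measure_univ]
      rw [← ENNReal.ofReal_one, ← ENNReal.ofReal_sub _ hql0]
    have hAeq : A = V s₀ ⁻¹' (Set.Iio ((b ^ l)⁻¹)) := rfl
    have hAceq : Aᶜ = V s₀ ⁻¹' ((Set.Iio ((b ^ l)⁻¹))ᶜ) := by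
      rw [Set.preimage_compl, hAeq]
    have hdisj : Disjoint (A ∩ B₁) (Aᶜ ∩ B₂) :=
      Disjoint.mono Set.inter_subset_left Set.inter_subset_left disjoint_compl_right
    have hsplit : P {ω | F b l (u+1) (fun n => V (s₀+n) ω) ≤ j} = P (A ∩ B₁) + P (Aᶜ ∩ B₂) := by
      rw [hE, measure_union hdisj (hAm.compl.inter hB₂m)]
    have hPB₁ : P (A ∩ B₁) = P A * P B₁ := by
      rw [hAeq]; exact hprodmeasure _ measurableSet_Iio (l+1)
    have hPB₂ : P (Aᶜ ∩ B₂) = P Aᶜ * P B₂ := by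
      rw [hAceq]; exact hprodmeasure _ measurableSet_Iio.compl l
    have hIH₂ : P B₂ ≤ ENNReal.ofReal
        ((∏ k ∈ Finset.Ico l j, ((b ^ k)⁻¹ / ((b ^ k)⁻¹ - (1 - κ)))) * κ ^ u) :=
      IH (s₀+1) l hl1 hlj
    rcases eq_or_lt_of_le hlj with heq | hlt
    · -- l = j : first branch is empty
      subst heq
      have hB₁empty : B₁ = ∅ := by
        ext ω
        simp only [hB₁, Set.mem_setOf_eq, Set.mem_empty_iff_false, iff_false, not_le]
        have := le_F b (l+1) u (fun n => V (s₀+1+n) ω)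
        omega
      have h0 : P (A ∩ B₁) = 0 := by
        rw [hB₁empty, Set.inter_empty, measure_empty]
      rw [hsplit, h0, zero_add, hPB₂, hPAc]
      calc ENNReal.ofReal (1 - (b ^ l)⁻¹) * P B₂
          ≤ ENNReal.ofReal (1 - (b ^ l)⁻¹) * ENNReal.ofReal
            ((∏ k ∈ Finset.Ico l l, ((b ^ k)⁻¹ / ((b ^ k)⁻¹ - (1 - κ)))) * κ ^ u) :=
            mul_le_mul' le_rfl hIH₂
        _ = ENNReal.ofReal ((1 - (b ^ l)⁻¹) * κ ^ u) := by
            rw [Finset.Ico_self, Finset.prod_empty, one_mul,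
              ← ENNReal.ofReal_mul (by linarith)]
        _ ≤ ENNReal.ofReal ((∏ k ∈ Finset.Ico l l, ((b ^ k)⁻¹ / ((b ^ k)⁻¹ - (1 - κ)))) * κ ^ (u+1)) := by
            rw [Finset.Ico_self, Finset.prod_empty, one_mul]
            apply ENNReal.ofReal_le_ofReal
            rw [pow_succ]
            have hκu : (0:ℝ) ≤ κ ^ u := pow_nonneg hκ0.le u
            calc (1 - (b ^ l)⁻¹) * κ ^ u ≤ κ * κ ^ u :=
                  mul_le_mul_of_nonneg_right hκ1 hκu
              _ = κ ^ u * κ := mul_comm _ _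
    · -- l < j
      have hIH₁ : P B₁ ≤ ENNReal.ofReal
          ((∏ k ∈ Finset.Ico (l+1) j, ((b ^ k)⁻¹ / ((b ^ k)⁻¹ - (1 - κ)))) * κ ^ u) :=
        IH (s₀+1) (l+1) (by omega) hlt
      set q : ℝ := (b ^ l)⁻¹ with hq
      set f : ℝ := q / (q - (1 - κ)) with hf
      set Dp : ℝ := ∏ k ∈ Finset.Ico (l+1) j, ((b ^ k)⁻¹ / ((b ^ k)⁻¹ - (1 - κ))) with hDp
      have hDeq : (∏ k ∈ Finset.Ico l j, ((b ^ k)⁻¹ / ((b ^ k)⁻¹ - (1 - κ)))) = f * Dp :=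
        Finset.prod_eq_prod_Ico_succ_bot hlt _
      have hDp0 : (0:ℝ) ≤ Dp := le_trans zero_le_one (hprod_one (l+1))
      have hκu : (0:ℝ) ≤ κ ^ u := pow_nonneg hκ0.le u
      have hf0 : (0:ℝ) ≤ f := le_trans zero_le_one (hfac_one l hlt)
      have hflq : f * (q - (1 - κ)) = q := div_mul_cancel₀ _ (ne_of_gt (hfac_pos l hlt))
      have hreal : q * (Dp * κ ^ u) + (1 - q) * ((f * Dp) * κ ^ u)
          ≤ (f * Dp) * κ ^ (u+1) := by
        rw [pow_succ]
        have hkey : q + (1 - q) * f = κ * f := by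
          have hne : q - (1 - κ) ≠ 0 := ne_of_gt (hfac_pos l hlt)
          rw [hf]
          field_simp
          ring
        linear_combination (Dp * κ ^ u) * hkey
      rw [hsplit, hPB₁, hPB₂, hPA, hPAc, hDeq]
      calc ENNReal.ofReal q * P B₁ + ENNReal.ofReal (1 - q) * P B₂
          ≤ ENNReal.ofReal q * ENNReal.ofReal (Dp * κ ^ u)
            + ENNReal.ofReal (1 - q) * ENNReal.ofReal ((f * Dp) * κ ^ u) := by
            apply add_le_add
            · exact mul_le_mul' le_rfl hIH₁
            · exact mul_le_mul' le_rfl (by rw [← hDeq]; exact hIH₂)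
        _ = ENNReal.ofReal (q * (Dp * κ ^ u) + (1 - q) * ((f * Dp) * κ ^ u)) := by
            rw [← ENNReal.ofReal_mul hql0, ← ENNReal.ofReal_mul (by linarith),
              ← ENNReal.ofReal_add (mul_nonneg hql0 (mul_nonneg hDp0 hκu))


                (mul_nonneg (by linarith) (mul_nonneg (mul_nonneg hf0 hDp0) hκu))]
        _ ≤ ENNReal.ofReal ((f * Dp) * κ ^ (u+1)) := ENNReal.ofReal_le_ofReal hreal

lemma blog {b : ℝ} (hb : 1 < b) : 1 ≤ b * Real.log (b / (b-1)) := by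
  have hb0 : (0:ℝ) < b := lt_trans one_pos hb
  have hb1 : (0:ℝ) < b - 1 := by linarith
  have h1 : (b-1)/b ≤ Real.exp (-(1/b)) := by
    have h := Real.add_one_le_exp (-(1/b))
    have : (b-1)/b = 1 - 1/b := by field_simp
    rw [this]; linarith
  have h2 : Real.exp (1/b) ≤ b/(b-1) := by
    have hinv : (Real.exp (-(1/b)))⁻¹ ≤ ((b-1)/b)⁻¹ := by
      apply inv_anti₀ (div_pos hb1 hb0) h1
    rwa [← Real.exp_neg, neg_neg, inv_div] at hinv
  have h3 : 1/b ≤ Real.log (b/(b-1)) := by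
    rw [Real.le_log_iff_exp_le (by positivity)]
    exact h2
  calc (1:ℝ) = b * (1/b) := by field_simp
    _ ≤ b * Real.log (b/(b-1)) := mul_le_mul_of_nonneg_left h3 hb0.le

end MorrisAux3


open MorrisAux MorrisAux2 MorrisAux3

set_option maxHeartbeats 8000000

/-- Lower-deviation bound for the Morris counter: after `t ≤ T` increments with base
`b > 1`, the estimate `τ̃(C_{t+1}) = (b^{C_{t+1}} - b)/(b - 1)` satisfies
`P(τ̃(C_{t+1}) < t/(b c log T) - 1) ≤ 1/T^{c-1}` for every `c > 0`. -/
theorem morris_counter_lower_deviation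
    {Ω : Type*} [MeasurableSpace Ω] (P : Measure Ω) [IsProbabilityMeasure P]
    (b : ℝ) (hb : 1 < b) (T t : ℕ) (hT : 2 ≤ T) (ht1 : 1 ≤ t) (htT : t ≤ T)
    (c : ℝ) (hc : 0 < c)
    (V : ℕ → Ω → ℝ) (hVmeas : ∀ s, Measurable (V s))
    (hVindep : iIndepFun V P)
    (hVunif : ∀ s, P.map (V s) = volume.restrict (Set.Icc (0 : ℝ) 1))
    (C : ℕ → Ω → ℕ) (hCmeas : ∀ s, Measurable (C s))
    (hC1 : ∀ ω, C 1 ω = 1)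
    (hCstep : ∀ s, 1 ≤ s → ∀ ω,
      C (s + 1) ω = if V s ω < (b ^ C s ω)⁻¹ then C s ω + 1 else C s ω) :
    P {ω | (b ^ C (t + 1) ω - b) / (b - 1) < (t : ℝ) / (b * c * Real.log T) - 1}
      ≤ ENNReal.ofReal (1 / (T : ℝ) ^ (c - 1)) := by
  classical
  have hb0 : (0:ℝ) < b := lt_trans one_pos hb
  have hb1 : (0:ℝ) < b - 1 := by linarith
  have hT2 : (2:ℝ) ≤ (T:ℝ) := by exact_mod_cast hT
  have hT0 : (0:ℝ) < (T:ℝ) := by linarith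
  have hT1 : (1:ℝ) < (T:ℝ) := by linarith
  have hlT : 0 < Real.log T := Real.log_pos hT1
  have hrhseq : (1:ℝ) / (T:ℝ) ^ (c-1) = (T:ℝ) ^ (1-c) := by
    rw [show (1-c) = -(c-1) by ring, Real.rpow_neg hT0.le, one_div]
  by_cases hc1 : c ≤ 1
  · refine le_trans prob_le_one ?_
    have h1 : (1:ℝ) ≤ (T:ℝ) ^ (1-c) := Real.one_le_rpow hT1.le (by linarith)
    calc (1:ℝ≥0∞) = ENNReal.ofReal 1 := ENNReal.ofReal_one.symm
      _ ≤ ENNReal.ofReal (1 / (T:ℝ) ^ (c-1)) := ENNReal.ofReal_le_ofReal (by rw [hrhseq]; exact h1)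
  push_neg at hc1
  obtain ⟨L, hLdef⟩ : ∃ L : ℝ, L = c * Real.log T := ⟨_, rfl⟩
  obtain ⟨x, hxdef⟩ : ∃ x : ℝ, x = (t:ℝ)/(b*c*Real.log T) - 1 := ⟨_, rfl⟩
  have hL0 : 0 < L := by rw [hLdef]; exact mul_pos (by linarith) hlT
  have hLgtlog : Real.log T < L := by rw [hLdef]; nlinarith
  -- identify C with the deterministic recursion F
  have hCF : ∀ ω, C (t+1) ω = F b 1 t (fun n => V (1+n) ω) := by
    intro ω
    have hgen : ∀ s : ℕ, C (s+1) ω = F b 1 s (fun n => V (1+n) ω) := by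
      intro s
      induction s with
      | zero => simpa using hC1 ω
      | succ s ih =>
        rw [hCstep (s+1) (by omega) ω, F_succ, ← ih]
        have hvs : 1 + s = s + 1 := by omega
        by_cases h : V (s+1) ω < (b ^ C (s+1) ω)⁻¹
        · rw [if_pos h, if_pos (by rwa [hvs])]
        · rw [if_neg h, if_neg (by rwa [hvs])]
          omega
    exact hgen t
  have hgoalset : {ω | (b ^ C (t + 1) ω - b) / (b - 1) < (t : ℝ) / (b * c * Real.log T) - 1}
      = {ω | (b ^ C (t + 1) ω - b) / (b - 1) < x} := by rw [hxdef]
  rw [hgoalset]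
  by_cases hxpos : x ≤ 0
  · -- event is empty
    have hempty : {ω | (b ^ C (t+1) ω - b)/(b-1) < x} = (∅ : Set Ω) := by
      ext ω
      simp only [Set.mem_setOf_eq, Set.mem_empty_iff_false, iff_false, not_lt]
      have hC1' : 1 ≤ C (t+1) ω := by rw [hCF ω]; exact le_F b 1 t _
      have hbge : b ≤ b ^ C (t+1) ω := by
        calc b = b ^ 1 := (pow_one b).symm
          _ ≤ b ^ C (t+1) ω := pow_le_pow_right₀ hb.le hC1'
      have h0 : 0 ≤ (b ^ C (t+1) ω - b)/(b-1) := div_nonneg (by linarith) hb1.le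
      linarith
    rw [hempty, measure_empty]
    exact zero_le
  push_neg at hxpos
  -- define the threshold level j
  obtain ⟨M, hMdef⟩ : ∃ M : ℝ, M = (b-1)*x + b := ⟨_, rfl⟩
  have hM : b < M := by rw [hMdef]; nlinarith
  obtain ⟨j, hj1, hjlt, hjspec⟩ : ∃ j : ℕ, 1 ≤ j ∧ b ^ j < M ∧ M ≤ b ^ (j+1) := by
    have hexists : ∃ k : ℕ, M ≤ b ^ (k+1) := by
      obtain ⟨n, hn⟩ := pow_unbounded_of_one_lt M hb
      exact ⟨n, le_of_lt (lt_of_lt_of_le hn (pow_le_pow_right₀ hb.le (by omega)))⟩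
    refine ⟨Nat.find hexists, ?_, ?_, Nat.find_spec hexists⟩
    · by_contra h
      have hj0 : Nat.find hexists = 0 := by omega
      have := Nat.find_spec hexists
      rw [hj0, pow_one] at this
      linarith
    · by_cases h0 : Nat.find hexists = 0
      · rw [h0, pow_zero]; linarith
      · have hmin := Nat.find_min hexists (m := Nat.find hexists - 1) (by omega)
        push_neg at hmin
        rwa [show Nat.find hexists - 1 + 1 = Nat.find hexists by omega] at hmin
  obtain ⟨σ, hσdef⟩ : ∃ σ : ℝ, σ = (b^(j+1) - b)/(b-1) := ⟨_, rfl⟩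
  have ht0 : (0:ℝ) < (t:ℝ) := by exact_mod_cast ht1
  have htT' : (t:ℝ) ≤ (T:ℝ) := by exact_mod_cast htT
  have hx1 : x + 1 = (t:ℝ)/(b*L) := by
    rw [hxdef, hLdef, ← mul_assoc]; ring
  have hσL : L * σ < t := by
    have h1 : σ < b*(x+1) := by
      rw [hσdef, div_lt_iff₀ hb1, pow_succ]
      nlinarith [hjlt]
    have h2 : L * σ < L * (b*(x+1)) := mul_lt_mul_of_pos_left h1 hL0
    have h3 : L * (b * (x+1)) = t := by
      rw [hx1]; field_simp
    linarith
  have hσb : b ^ j ≤ σ := by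
    rw [hσdef, le_div_iff₀ hb1, pow_succ]
    have hbj : b ≤ b ^ j := by
      calc b = b ^ 1 := (pow_one b).symm
        _ ≤ b ^ j := pow_le_pow_right₀ hb.le hj1
    nlinarith
  have hσ0 : 0 < σ := lt_of_lt_of_le (pow_pos hb0 j) hσb
  -- event inclusion
  have hincl : {ω | (b ^ C (t + 1) ω - b) / (b - 1) < x}
      ⊆ {ω | F b 1 t (fun n => V (1+n) ω) ≤ j} := by
    intro ω hω
    simp only [Set.mem_setOf_eq] at hω ⊢
    rw [← hCF ω]
    by_contra hgt
    push_neg at hgt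
    have h1 : b ^ (j+1) ≤ b ^ (C (t+1) ω) := pow_le_pow_right₀ hb.le (by omega)
    have h2 : b ^ C (t+1) ω < M := by
      rw [div_lt_iff₀ hb1] at hω
      rw [hMdef]
      nlinarith
    linarith [hjspec]
  refine le_trans (measure_mono hincl) ?_
  rw [hrhseq]
  have hTrpow : (T:ℝ) ^ (1-c) = Real.exp ((1-c) * Real.log T) := by rw [Real.rpow_def_of_pos hT0, mul_comm]
  by_cases hj1' : j = 1
  · -- Case j = 1
    subst hj1'
    have hbinv0 : (0:ℝ) < 1 - (b^1)⁻¹ := by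
      have h1 : (b^1)⁻¹ < 1 := by
        rw [pow_one, inv_lt_one_iff₀]; right; exact hb
      linarith
    have hκ2 : 1 - (b^1)⁻¹ < 1 := by
      have : (0:ℝ) < (b^1)⁻¹ := by positivity
      linarith
    have hkey := key P b hb V hVmeas hVindep hVunif 1 le_rfl (1 - (b^1)⁻¹) le_rfl hκ2 t 1 1
      le_rfl le_rfl
    refine le_trans hkey (ENNReal.ofReal_le_ofReal ?_)
    rw [Finset.Ico_self, Finset.prod_empty, one_mul]
    have hg0 : 0 < Real.log (b/(b-1)) := Real.log_pos ((one_lt_div hb1).mpr (by linarith))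
    have hlogeq : Real.log (1 - (b^1)⁻¹) = - Real.log (b/(b-1)) := by
      rw [show (1 - (b^1)⁻¹) = (b/(b-1))⁻¹ by rw [pow_one]; field_simp, Real.log_inv]
    have hσ1 : σ = b := by
      rw [hσdef, div_eq_iff (ne_of_gt hb1)]; ring
    have hLbt : L * b < t := by rw [← hσ1]; exact hσL
    have h5 : L ≤ (t:ℝ) * Real.log (b/(b-1)) := by
      calc L = L * 1 := (mul_one L).symm
        _ ≤ L * (b * Real.log (b/(b-1))) := mul_le_mul_of_nonneg_left (blog hb) hL0.le
        _ = (L * b) * Real.log (b/(b-1)) := by ring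
        _ ≤ (t:ℝ) * Real.log (b/(b-1)) := mul_le_mul_of_nonneg_right hLbt.le hg0.le
    have hmain : (t:ℝ) * Real.log (1 - (b^1)⁻¹) ≤ (1-c) * Real.log T := by
      rw [hlogeq]
      have : (1-c) * Real.log T = Real.log T - L := by rw [hLdef]; ring
      rw [this]
      linarith
    calc (1 - (b^1)⁻¹) ^ t = Real.exp ((t:ℝ) * Real.log (1 - (b^1)⁻¹)) := by
          rw [Real.exp_nat_mul, Real.exp_log hbinv0]
      _ ≤ Real.exp ((1-c) * Real.log T) := Real.exp_le_exp.mpr hmain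
      _ = (T:ℝ) ^ (1-c) := hTrpow.symm
  · -- now j ≥ 2
    have hj2 : 2 ≤ j := by omega
    by_cases ht3 : 3 ≤ t
    · -- main case : t ≥ 3
      have hT3 : (3:ℝ) ≤ (T:ℝ) := le_trans (by exact_mod_cast ht3) htT'
      have hlogT1 : 1 ≤ Real.log T := by
        rw [Real.le_log_iff_exp_le hT0]
        have := Real.exp_one_lt_d9
        linarith
      have hL1 : 1 < L := by rw [hLdef]; nlinarith
      have hσt : σ < t := by nlinarith
      have hq0 : (0:ℝ) < (b^j)⁻¹ := by positivity
      have hq1 : (b^j)⁻¹ < 1 := by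
        rw [inv_lt_one_iff₀]; right; exact one_lt_pow₀ hb (by omega)
      obtain ⟨δ, hδdef⟩ : ∃ δ : ℝ, δ = (b^j)⁻¹ * (((t:ℝ) - σ)/(t:ℝ)) := ⟨_, rfl⟩
      have hδ0 : 0 < δ := by
        rw [hδdef]; exact mul_pos hq0 (div_pos (by linarith) ht0)
      have hδq : δ < (b^j)⁻¹ := by
        rw [hδdef]
        have h1 : ((t:ℝ) - σ)/(t:ℝ) < 1 := by rw [div_lt_one ht0]; linarith
        nlinarith
      have hκ1 : 1 - (b^j)⁻¹ ≤ 1 - δ := by linarith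
      have hκ2 : 1 - δ < 1 := by linarith
      have hqkδ' : ∀ k, k < j → 0 < (b^k)⁻¹ - δ := by
        intro k hk
        have hbk0 : (0:ℝ) < b^k := pow_pos hb0 k
        have hbkj : b^k ≤ b^j := pow_le_pow_right₀ hb.le hk.le
        have hqq : (b^j)⁻¹ ≤ (b^k)⁻¹ := inv_anti₀ hbk0 hbkj
        linarith
      have hkey := key P b hb V hVmeas hVindep hVunif j hj1 (1-δ) hκ1 hκ2 t 1 1 le_rfl hj1
      refine le_trans hkey (ENNReal.ofReal_le_ofReal ?_)
      obtain ⟨lam, hlamdef⟩ : ∃ lam : ℝ, lam = (t:ℝ)/σ := ⟨_, rfl⟩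
      have hlam1 : 1 < lam := by rw [hlamdef, lt_div_iff₀ hσ0]; linarith
      have hlamL : L < lam := by rw [hlamdef, lt_div_iff₀ hσ0]; linarith
      have hlam0 : 0 < lam := by linarith
      have hδbj : δ * b^j = ((t:ℝ) - σ)/(t:ℝ) := by
        rw [hδdef]
        field_simp
      -- per-factor bound via Bernoulli's inequality
      have hfac : ∀ k ∈ Finset.Ico 1 j, ((b^k)⁻¹ / ((b^k)⁻¹ - (1 - (1-δ))))
          ≤ Real.exp ((b^k * (b^j)⁻¹) * Real.log lam) := by
        intro k hk
        rw [Finset.mem_Ico] at hk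
        have hkj : k < j := hk.2
        have hbk0 : (0:ℝ) < b^k := pow_pos hb0 k
        have hbkj : b^k ≤ b^j := pow_le_pow_right₀ hb.le hkj.le
        have hδbk1 : δ * b^k < 1 := by
          have h1 : δ * b^k < (b^j)⁻¹ * b^k := mul_lt_mul_of_pos_right hδq hbk0
          have h2 : (b^j)⁻¹ * b^k ≤ (b^j)⁻¹ * b^j := mul_le_mul_of_nonneg_left hbkj hq0.le
          have h3 : (b^j)⁻¹ * b^j = 1 := inv_mul_cancel₀ (ne_of_gt (pow_pos hb0 j))
          linarith
        have hA0 : 0 < 1 - δ * b^k := by linarith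
        have hqkδ : 0 < (b^k)⁻¹ - δ := hqkδ' k hkj
        have heq : (b^k)⁻¹ / ((b^k)⁻¹ - (1 - (1-δ))) = (1 - δ * b^k)⁻¹ := by
          rw [show (1:ℝ) - (1-δ) = δ by ring]
          rw [inv_eq_one_div (1 - δ * b^k), div_eq_div_iff (ne_of_gt hqkδ) (ne_of_gt hA0)]
          field_simp
        have hpk : b^(j-k) * b^k = b^j := by rw [← pow_add]; congr 1; omega
        have hp1 : (1:ℝ) ≤ b^(j-k) := one_le_pow₀ hb.le
        have hp0 : (0:ℝ) < b^(j-k) := pow_pos hb0 _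
        have hBer := one_add_mul_self_le_rpow_one_add
          (by linarith : (-1:ℝ) ≤ -(δ * b^k)) hp1
        have hlhs : 1 + (b^(j-k):ℝ) * -(δ * b^k) = σ/(t:ℝ) := by
          have hmm : (b^(j-k):ℝ) * (δ * b^k) = δ * b^j := by rw [← hpk]; ring
          rw [mul_neg, hmm, hδbj]
          field_simp
          ring
        rw [hlhs, show (1:ℝ) + -(δ * b^k) = 1 - δ * b^k by ring] at hBer
        have hroot : (σ/(t:ℝ)) ^ ((b^(j-k):ℝ)⁻¹) ≤ 1 - δ * b^k := by
          have h1 := Real.rpow_le_rpow (by positivity) hBer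
            (by positivity : (0:ℝ) ≤ ((b^(j-k):ℝ))⁻¹)
          rwa [← Real.rpow_mul hA0.le, mul_inv_cancel₀ (ne_of_gt hp0), Real.rpow_one] at h1
        have hrpos : 0 < (σ/(t:ℝ)) ^ ((b^(j-k):ℝ)⁻¹) :=
          Real.rpow_pos_of_pos (by positivity) _
        have hinv : (1 - δ * b^k)⁻¹ ≤ ((σ/(t:ℝ)) ^ ((b^(j-k):ℝ)⁻¹))⁻¹ :=
          inv_anti₀ hrpos hroot
        have heinv : ((b^(j-k):ℝ))⁻¹ = b^k * (b^j)⁻¹ := by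
          rw [← hpk, mul_inv]
          field_simp
        calc (b^k)⁻¹ / ((b^k)⁻¹ - (1 - (1-δ))) = (1 - δ * b^k)⁻¹ := heq
          _ ≤ ((σ/(t:ℝ)) ^ ((b^(j-k):ℝ)⁻¹))⁻¹ := hinv
          _ = ((t:ℝ)/σ) ^ ((b^(j-k):ℝ)⁻¹) := by
              rw [← Real.inv_rpow (by positivity), inv_div]
          _ = Real.exp ((b^k * (b^j)⁻¹) * Real.log lam) := by
              rw [Real.rpow_def_of_pos (by positivity), heinv, hlamdef, mul_comm]
      -- product bound
      have hDle : (∏ k ∈ Finset.Ico 1 j, ((b^k)⁻¹ / ((b^k)⁻¹ - (1 - (1-δ)))))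
          ≤ Real.exp (((b^j)⁻¹ * ((b^j - b)/(b-1))) * Real.log lam) := by
        have h1 : (∏ k ∈ Finset.Ico 1 j, ((b^k)⁻¹ / ((b^k)⁻¹ - (1 - (1-δ)))))
            ≤ ∏ k ∈ Finset.Ico 1 j, Real.exp ((b^k * (b^j)⁻¹) * Real.log lam) := by
          apply Finset.prod_le_prod
          · intro k hk
            rw [Finset.mem_Ico] at hk
            have := hqkδ' k hk.2
            have : (0:ℝ) < (b^k)⁻¹ - (1 - (1-δ)) := by
              rw [show (1:ℝ) - (1-δ) = δ by ring]; exact hqkδ' k hk.2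
            positivity
          · exact hfac
        have h2 : ∏ k ∈ Finset.Ico 1 j, Real.exp ((b^k * (b^j)⁻¹) * Real.log lam)
            = Real.exp (∑ k ∈ Finset.Ico 1 j, (b^k * (b^j)⁻¹) * Real.log lam) :=
          (Real.exp_sum _ _).symm
        have h3 : ∑ k ∈ Finset.Ico 1 j, (b^k * (b^j)⁻¹) * Real.log lam
            = ((b^j)⁻¹ * ((b^j - b)/(b-1))) * Real.log lam := by
          have hc1' : ∀ k, (b^k * (b^j)⁻¹) * Real.log lam
              = b^k * ((b^j)⁻¹ * Real.log lam) := fun k => by ring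
          simp only [hc1']
          rw [← Finset.sum_mul, geom_sum_Ico hb.ne' hj1, pow_one]
          ring
        rw [h2, h3] at h1
        exact h1
      -- decay bound
      have hκt : (1-δ) ^ t ≤ Real.exp ((t:ℝ) * (-δ)) := by
        have h1 : (1-δ) ≤ Real.exp (-δ) := by
          have := Real.add_one_le_exp (-δ); linarith
        have h2 : (1-δ)^t ≤ (Real.exp (-δ))^t := pow_le_pow_left₀ (by linarith) h1 t
        rwa [← Real.exp_nat_mul] at h2
      -- final numeric inequality
      have hy1 : 1 ≤ (b^j)⁻¹ * σ := by
        have h1 : (b^j)⁻¹ * b^j ≤ (b^j)⁻¹ * σ := mul_le_mul_of_nonneg_left hσb hq0.le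
        rwa [inv_mul_cancel₀ (ne_of_gt (pow_pos hb0 j))] at h1
      have hloglam : Real.log lam ≤ lam - 1 := Real.log_le_sub_one_of_pos hlam0
      have hmono : ((b^j)⁻¹ * σ) * (Real.log lam - lam + 1) ≤ 1 * (Real.log lam - lam + 1) :=
        mul_le_mul_of_nonpos_right hy1 (by linarith)
      have hσ'eq : (b^j)⁻¹ * ((b^j - b)/(b-1)) = (b^j)⁻¹ * σ - 1 := by
        rw [hσdef, pow_succ]
        field_simp
        ring
      have hδt : (t:ℝ) * δ = (b^j)⁻¹ * (t:ℝ) - (b^j)⁻¹ * σ := by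
        rw [hδdef]; field_simp
      have hqt : (b^j)⁻¹ * (t:ℝ) = ((b^j)⁻¹ * σ) * lam := by
        rw [hlamdef]; field_simp
      have hfinal : ((b^j)⁻¹ * ((b^j - b)/(b-1))) * Real.log lam + (t:ℝ) * (-δ)
          ≤ (1-c) * Real.log T := by
        rw [hσ'eq, show (1-c) * Real.log T = Real.log T - L by rw [hLdef]; ring]
        linarith [hmono, hlamL, hlogT1, hδt, hqt]
      calc (∏ k ∈ Finset.Ico 1 j, ((b^k)⁻¹ / ((b^k)⁻¹ - (1 - (1-δ))))) * (1-δ)^t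
          ≤ Real.exp (((b^j)⁻¹ * ((b^j - b)/(b-1))) * Real.log lam)
            * Real.exp ((t:ℝ)*(-δ)) :=
            mul_le_mul hDle hκt (pow_nonneg (by linarith) t) (Real.exp_nonneg _)
        _ = Real.exp ((((b^j)⁻¹ * ((b^j - b)/(b-1))) * Real.log lam) + (t:ℝ)*(-δ)) :=
            (Real.exp_add _ _).symm
        _ ≤ Real.exp ((1-c) * Real.log T) := Real.exp_le_exp.mpr hfinal
        _ = (T:ℝ) ^ (1-c) := hTrpow.symm
    · -- corner case : j = 2, t = 2
      have hlog2 := Real.log_two_gt_d9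
      have hlogT2 : Real.log 2 ≤ Real.log T := Real.log_le_log (by norm_num) hT2
      have hσbb : b*(b+1) ≤ σ := by
        rw [hσdef, le_div_iff₀ hb1]
        have h34 : b^3 ≤ b^(j+1) := pow_le_pow_right₀ hb.le (by omega)
        nlinarith
      have hσ2 : 2 < σ := by nlinarith
      have hLlog2 : Real.log 2 < L := lt_of_le_of_lt hlogT2 hLgtlog
      have ht2 : t = 2 := by
        have h1 : (1:ℝ) < L * σ := by nlinarith
        have h2 : (1:ℝ) < (t:ℝ) := lt_trans h1 hσL
        have h3 : 1 < t := by exact_mod_cast h2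
        omega
      subst ht2
      have hσL2 : L * σ < 2 := by exact_mod_cast hσL
      have hj2' : j = 2 := by
        by_contra hne
        have hσ3 : b*(b^2+b+1) ≤ σ := by
          rw [hσdef, le_div_iff₀ hb1]
          have h45 : b^4 ≤ b^(j+1) := pow_le_pow_right₀ hb.le (by omega)
          nlinarith
        have hσgt3 : 3 < σ := by nlinarith
        nlinarith [hLlog2, hlog2]
      subst hj2'
      have hq0 : (0:ℝ) < (b^2)⁻¹ := by positivity
      have hκ2 : 1 - (b^2)⁻¹ < 1 := by linarith
      have hkey := key P b hb V hVmeas hVindep hVunif 2 (by omega) (1 - (b^2)⁻¹) le_rfl hκ2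
        2 1 1 le_rfl (by omega)
      refine le_trans hkey (ENNReal.ofReal_le_ofReal ?_)
      clear hkey hincl hCF hgoalset hCstep hC1 hCmeas hVunif hVindep hVmeas hjlt hjspec hMdef hM hxdef hx1 hxpos
      rw [show Finset.Ico 1 2 = {1} from rfl, Finset.prod_singleton]
      have hb2 : b^1 < b^2 := by
        rw [pow_one, sq]
        nlinarith
      have hden : (0:ℝ) < (b^1)⁻¹ - (b^2)⁻¹ := by
        have := inv_strictAnti₀ (pow_pos hb0 1) hb2
        linarith
      have hDval : ((b^1)⁻¹ / ((b^1)⁻¹ - (1 - (1 - (b^2)⁻¹)))) * (1 - (b^2)⁻¹)^2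
          = (b+1)^2*(b-1)/b^3 := by
        rw [show (1:ℝ) - (1 - (b^2)⁻¹) = (b^2)⁻¹ by ring]
        rw [div_mul_eq_mul_div, div_eq_div_iff (ne_of_gt hden)
          (by positivity : (0:ℝ) < b^3).ne']
        field_simp
        ring
      rw [hDval]
      have hL1' : L < 1 := by clear * - hσL2 hσ2 hL0; nlinarith
      have h693 : (0.6931471803:ℝ)*(b*(b+1)) < 2 := by
        clear * - hLlog2 hlog2 hL0 hσbb hσL2 hb hb0
        nlinarith [mul_le_mul_of_nonneg_left hσbb hL0.le]
      have hE := Real.exp_one_lt_d9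
      have hE0 := Real.exp_pos 1
      have hpoly : (b+1)^2*(b-1)/b^3 ≤ 2*Real.exp (-1) := by
        have hkey2 : (b+1)^2*(b-1)*Real.exp 1 ≤ 2*b^3 := by
          clear * - h693 hb hE hE0
          have hb127 : b < 1.271 := by nlinarith
          have hpos : (0:ℝ) ≤ (b+1)^2*(b-1) := by nlinarith [sq_nonneg (b+1)]
          have hEb : (b+1)^2*(b-1)*Real.exp 1 ≤ (b+1)^2*(b-1)*2.7182818286 :=
            mul_le_mul_of_nonneg_left hE.le hpos
          have hh1 : (0:ℝ) ≤ (1.271 - b)*(b-1) := by nlinarith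
          have hh2 : (0:ℝ) ≤ (1.271 - b)*(b-1)^2 := by nlinarith [sq_nonneg (b-1)]
          nlinarith [hh1, hh2]
        rw [div_le_iff₀ (by positivity), Real.exp_neg]
        calc (b+1)^2*(b-1) = ((b+1)^2*(b-1)*Real.exp 1)/Real.exp 1 := by field_simp
          _ ≤ (2*b^3)/Real.exp 1 := by gcongr
          _ = 2*(Real.exp 1)⁻¹*b^3 := by rw [div_eq_mul_inv]; ring
      have hTfin : 2*Real.exp (-1) ≤ (T:ℝ)^(1-c) := by
        rw [hTrpow, show (1-c)*Real.log T = Real.log T - L by rw [hLdef]; ring,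
          Real.exp_sub, Real.exp_log hT0]
        have h1 : Real.exp (-1) ≤ Real.exp (-L) := Real.exp_le_exp.mpr (by linarith)
        have h2 : (2:ℝ)*Real.exp (-L) ≤ (T:ℝ)*Real.exp (-L) :=
          mul_le_mul_of_nonneg_right hT2 (Real.exp_nonneg _)
        have h3 : (T:ℝ)*Real.exp (-L) = (T:ℝ)/Real.exp L := by
          rw [Real.exp_neg]; ring
        have h4 : (2:ℝ)*Real.exp (-1) ≤ 2*Real.exp (-L) := by linarith
        linarith [h2, h3.symm.le, h3.le, h4]
      linarith [hpoly, hTfin]
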